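/- Let G be a group, let i, j ≥ 1, set n = i + j, and let N₁, …, N_n be normal subgroups of G. Then [[N₁, …, N_i], [N_{i+1}, …, N_n]] is contained in the join (equivalently, the product) over all permutations σ of {1, …, n} of the left-normed iterated commutator subgroups [N_{σ(1)}, …, N_{σ(n)}]. -/

import Mathlib

/-- The left-normed iterated commutator `[A₁, …, A_k]` of a list of subgroups
(`⊤` by convention on the empty list). -/
def iteratedCommutator {G : Type*} [Group G] : List (Subgroup G) → Subgroup G
  | [] => ⊤
  | A :: l => l.foldl (fun H K => ⁅H, K⁆) A

section Aux

variable {G : Type*} [Group G]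

lemma iteratedCommutator_append_singleton (l : List (Subgroup G)) (hl : l ≠ []) (a : Subgroup G) :
    iteratedCommutator (l ++ [a]) = ⁅iteratedCommutator l, a⁆ := by
  cases l with
  | nil => exact (hl rfl).elim
  | cons A t => simp [iteratedCommutator, List.foldl_append]

lemma iteratedCommutator_normal : ∀ (l : List (Subgroup G)), (∀ H ∈ l, H.Normal) →
    (iteratedCommutator l).Normal := by
  intro l
  induction l using List.reverseRecOn with
  | nil => intro _; exact ⟨by intro n hn g; simp [iteratedCommutator]⟩
  | append_singleton l a ih =>
    intro h
    rcases eq_or_ne l [] with rfl | hl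
    · simpa [iteratedCommutator] using h a (by simp)
    · rw [iteratedCommutator_append_singleton l hl a]
      have h1 : (iteratedCommutator l).Normal := ih fun H hH => h H (by simp [hH])
      have h2 : a.Normal := h a (by simp)
      exact Subgroup.commutator_normal _ _

lemma normal_iSup {ι : Sort*} (H : ι → Subgroup G) (h : ∀ i, (H i).Normal) :
    (⨆ i, H i).Normal := by
  constructor
  intro n hn g
  refine Subgroup.iSup_induction H (C := fun x => g * x * g⁻¹ ∈ ⨆ i, H i) hn
    (fun i x hx => ?_) ?_ (fun x y hx hy => ?_)
  · exact le_iSup H i ((h i).conj_mem x hx g)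
  · simpa using (⨆ i, H i).one_mem
  · show g * (x * y) * g⁻¹ ∈ ⨆ i, H i
    have heq : g * (x * y) * g⁻¹ = (g * x * g⁻¹) * (g * y * g⁻¹) := by group
    rw [heq]; exact Subgroup.mul_mem _ hx hy

/-- Commutator with a supremum, relative to a normal target. -/
lemma commutator_iSup_le {ι : Sort*} (H : ι → Subgroup G) (K M : Subgroup G) (hM : M.Normal)
    (h : ∀ i, ⁅H i, K⁆ ≤ M) : ⁅⨆ i, H i, K⁆ ≤ M := by
  let φ := QuotientGroup.mk' M
  have key : ∀ A B : Subgroup G, ⁅A, B⁆ ≤ M ↔ ⁅A.map φ, B.map φ⁆ = ⊥ := by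
    intro A B
    rw [← Subgroup.map_commutator, Subgroup.map_eq_bot_iff, QuotientGroup.ker_mk']
  rw [key, Subgroup.map_iSup, Subgroup.commutator_eq_bot_iff_le_centralizer]
  refine iSup_le fun i => ?_
  rw [← Subgroup.commutator_eq_bot_iff_le_centralizer, ← key]
  exact h i

/-- Three subgroups inequality for normal subgroups. -/
lemma commutator_comm_le_sup (A B C : Subgroup G) (hA : A.Normal) (hB : B.Normal)
    (hC : C.Normal) : ⁅A, ⁅B, C⁆⁆ ≤ ⁅⁅A, B⁆, C⁆ ⊔ ⁅⁅A, C⁆, B⁆ := by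
  set M : Subgroup G := ⁅⁅A, B⁆, C⁆ ⊔ ⁅⁅A, C⁆, B⁆ with hMdef
  have hM : M.Normal := Subgroup.sup_normal _ _
  let φ := QuotientGroup.mk' M
  have key : ∀ A B : Subgroup G, ⁅A, B⁆ ≤ M ↔ ⁅A.map φ, B.map φ⁆ = ⊥ := by
    intro A B
    rw [← Subgroup.map_commutator, Subgroup.map_eq_bot_iff, QuotientGroup.ker_mk']
  have h1 : ⁅⁅A, B⁆, C⁆ ≤ M := le_sup_left
  have h2 : ⁅⁅A, C⁆, B⁆ ≤ M := le_sup_right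
  rw [key] at h1 h2 ⊢
  rw [Subgroup.map_commutator] at h1 h2 ⊢
  rw [Subgroup.commutator_comm]
  refine Subgroup.commutator_commutator_eq_bot_of_rotate ?_ h1
  rwa [Subgroup.commutator_comm (Subgroup.map φ C)]

/-- The target: supremum over all permuted lists. -/
noncomputable def permSup (L : List (Subgroup G)) : Subgroup G :=
  ⨆ l' : { l' : List (Subgroup G) // l'.Perm L }, iteratedCommutator l'.val

lemma permSup_normal (L : List (Subgroup G)) (h : ∀ H ∈ L, H.Normal) :
    (permSup L).Normal := by
  refine normal_iSup _ fun ⟨l', hl'⟩ => iteratedCommutator_normal l' fun H hH =>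
    h H (hl'.mem_iff.mp hH)

lemma le_permSup {L l' : List (Subgroup G)} (h : l'.Perm L) :
    iteratedCommutator l' ≤ permSup L :=
  le_iSup (fun l' : { l' : List (Subgroup G) // l'.Perm L } => iteratedCommutator l'.val) ⟨l', h⟩

lemma permSup_le_permSup {L L' : List (Subgroup G)} (h : L.Perm L') :
    permSup L ≤ permSup L' :=
  iSup_le fun ⟨l', hl'⟩ => le_permSup (hl'.trans h)

lemma main_list_lemma : ∀ (l₂ l₁ : List (Subgroup G)), l₁ ≠ [] → l₂ ≠ [] →
    (∀ H ∈ l₁ ++ l₂, H.Normal) →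
    ⁅iteratedCommutator l₁, iteratedCommutator l₂⁆ ≤ permSup (l₁ ++ l₂) := by
  intro l₂
  induction l₂ using List.reverseRecOn with
  | nil => intro l₁ _ h2 _; exact (h2 rfl).elim
  | append_singleton l₂ a ih =>
    intro l₁ h1 _ hnorm
    have hmemnorm : ∀ H ∈ l₁ ++ l₂ ++ [a], H.Normal := by
      intro H hH; exact hnorm H (by simpa [List.append_assoc] using hH)
    have hnorm₁ : ∀ H ∈ l₁, H.Normal := fun H hH => hnorm H (by simp [hH])
    have ha : a.Normal := hnorm a (by simp)
    have hAnormal : (iteratedCommutator l₁).Normal := iteratedCommutator_normal l₁ hnorm₁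
    rcases eq_or_ne l₂ [] with rfl | hl₂
    · -- single element case : the identity arrangement works
      have hsingle : iteratedCommutator ([] ++ [a] : List (Subgroup G)) = a := rfl
      rw [hsingle, ← iteratedCommutator_append_singleton l₁ h1 a]
      exact le_permSup (List.Perm.refl _)
    · have hnorm₂ : ∀ H ∈ l₂, H.Normal := fun H hH => hnorm H (by simp [hH])
      have hBnormal : (iteratedCommutator l₂).Normal := iteratedCommutator_normal l₂ hnorm₂
      rw [iteratedCommutator_append_singleton l₂ hl₂ a]
      have hkey := commutator_comm_le_sup (iteratedCommutator l₁) (iteratedCommutator l₂) a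
        hAnormal hBnormal ha
      refine hkey.trans (sup_le ?_ ?_)
      · -- ⁅⁅A,B⁆,a⁆
        have hIH : ⁅iteratedCommutator l₁, iteratedCommutator l₂⁆ ≤ permSup (l₁ ++ l₂) :=
          ih l₁ h1 hl₂ fun H hH => hnorm H (by
            rcases List.mem_append.mp hH with h | h
            · simp [h]
            · simp [h])
      -- bracket with a
        have : ⁅permSup (l₁ ++ l₂), a⁆ ≤ permSup (l₁ ++ (l₂ ++ [a])) := by
          refine commutator_iSup_le _ _ _ (permSup_normal _ fun H hH =>
            hnorm H (by simpa [List.append_assoc] using hH)) ?_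
          rintro ⟨l', hl'⟩
          have hl'ne : l' ≠ [] := by
            intro h
            rw [h] at hl'
            exact h1 (List.append_eq_nil_iff.mp hl'.symm.eq_nil).1
          rw [← iteratedCommutator_append_singleton l' hl'ne a]
          refine le_permSup ?_
          rw [← List.append_assoc]
          exact hl'.append_right [a]
        exact le_trans (Subgroup.commutator_mono hIH le_rfl) this
      · -- ⁅⁅A,a⁆,B⁆
        rw [← iteratedCommutator_append_singleton l₁ h1 a]
        have hIH : ⁅iteratedCommutator (l₁ ++ [a]), iteratedCommutator l₂⁆ ≤
            permSup ((l₁ ++ [a]) ++ l₂) := by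
          refine ih (l₁ ++ [a]) (by simp) hl₂ fun H hH => ?_
          refine hnorm H ?_
          rcases List.mem_append.mp hH with h | h
          · rcases List.mem_append.mp h with h' | h'
            · simp [h']
            · simp at h'; simp [h']
          · simp [h]
        refine hIH.trans (permSup_le_permSup ?_)
        rw [List.append_assoc]
        exact List.Perm.append_left l₁ (List.perm_append_comm)

/-- An extension of a permutation of `Fin m` to `Fin (m+1)` fixing `0`. -/
def extendPermSucc {m : ℕ} (τ : Equiv.Perm (Fin m)) : Equiv.Perm (Fin (m + 1)) where
  toFun := Fin.cases 0 fun i => (τ i).succ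
  invFun := Fin.cases 0 fun i => (τ.symm i).succ
  left_inv x := by cases x using Fin.cases <;> simp
  right_inv x := by cases x using Fin.cases <;> simp

lemma exists_perm_ofFn {α : Type*} : ∀ (n : ℕ) (f : Fin n → α) (l : List α),
    l.Perm (List.ofFn f) → ∃ σ : Equiv.Perm (Fin n), l = List.ofFn (f ∘ σ) := by
  intro n
  induction n with
  | zero =>
    intro f l hl
    refine ⟨1, ?_⟩
    simpa using hl
  | succ m IH =>
    intro f l hl
    rcases l with _ | ⟨a, l'⟩
    · exfalso; have := hl.length_eq; simp at this
    · have ha : a ∈ List.ofFn f := hl.mem_iff.mp (by simp)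
      rw [List.mem_ofFn] at ha
      obtain ⟨k, hk⟩ := ha
      set g : Fin (m + 1) → α := f ∘ (Equiv.swap 0 k) with hg
      have hperm2 : (a :: l').Perm (List.ofFn g) :=
        hl.trans ((Equiv.swap 0 k).ofFn_comp_perm f).symm
      have hofg : List.ofFn g = a :: List.ofFn (g ∘ Fin.succ) := by
        rw [List.ofFn_succ]
        congr 1
      rw [hofg] at hperm2
      have hl' : l'.Perm (List.ofFn (g ∘ Fin.succ)) := hperm2.cons_inv
      obtain ⟨τ, hτ⟩ := IH (g ∘ Fin.succ) l' hl'
      refine ⟨(extendPermSucc τ).trans (Equiv.swap 0 k), ?_⟩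
      rw [List.ofFn_succ]
      have h0 : (f ∘ ((extendPermSucc τ).trans (Equiv.swap 0 k))) 0 = a := by
        simp [extendPermSucc, hk]
      rw [h0]
      congr 1

end Aux

theorem statement4 {G : Type*} [Group G] (i j : ℕ) (hi : 1 ≤ i) (hj : 1 ≤ j)
    (N : Fin (i + j) → Subgroup G) (hN : ∀ k, (N k).Normal) :
    ⁅iteratedCommutator (List.ofFn fun k : Fin i => N (Fin.castAdd j k)),
        iteratedCommutator (List.ofFn fun k : Fin j => N (Fin.natAdd i k))⁆ ≤
      ⨆ σ : Equiv.Perm (Fin (i + j)),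
        iteratedCommutator (List.ofFn fun k => N (σ k)) := by
  have happ : (List.ofFn fun k : Fin i => N (Fin.castAdd j k)) ++
      (List.ofFn fun k : Fin j => N (Fin.natAdd i k)) = List.ofFn N :=
    (List.ofFn_add (f := N)).symm
  have h1 : (List.ofFn fun k : Fin i => N (Fin.castAdd j k)) ≠ [] := by
    simp only [ne_eq, List.ofFn_eq_nil_iff]
    omega
  have h2 : (List.ofFn fun k : Fin j => N (Fin.natAdd i k)) ≠ [] := by
    simp only [ne_eq, List.ofFn_eq_nil_iff]
    omega
  have hmem : ∀ H ∈ (List.ofFn fun k : Fin i => N (Fin.castAdd j k)) ++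
      (List.ofFn fun k : Fin j => N (Fin.natAdd i k)), H.Normal := by
    rw [happ]
    intro H hH
    rw [List.mem_ofFn] at hH
    obtain ⟨k, rfl⟩ := hH
    exact hN k
  have hmain := main_list_lemma _ _ h1 h2 hmem
  rw [happ] at hmain
  refine hmain.trans (iSup_le ?_)
  rintro ⟨l', hl'⟩
  obtain ⟨σ, rfl⟩ := exists_perm_ofFn _ N l' hl'
  exact le_iSup (fun σ : Equiv.Perm (Fin (i + j)) =>
    iteratedCommutator (List.ofFn fun k => N (σ k))) σ
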